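/- Let A be a (possibly noncommutative) unital ring. For u = 1, 2 let R_u = D_u + C_u·(1_{N_u} − Σ_{k=1}^m X_k (A_u)_k)^{-1}·(Σ_{k=1}^m X_k (B_u)_k) be realizations, with matrices over A of compatible sizes (R_1 of size p×q, R_2 of size q×r), viewed as matrices over the ring of formal power series in m commuting variables X_1, …, X_m over A. Then the product R_1·R_2 admits the realization R_1 R_2 = D + C·(1_{N_1+N_2} − Σ_{k=1}^m X_k A_k)^{-1}·(Σ_{k=1}^m X_k B_k) with the block matrices A_k = [[ (A_1)_k , (B_1)_k C_2 ], [ 0 , (A_2)_k ]], B_k = [ (B_1)_k D_2 ; (B_2)_k ], C = [ C_1 , D_1 C_2 ], D = D_1 D_2. -/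

import Mathlib

section Hom

variable {A : Type*} [Ring A] {σ n : Type*} [Fintype n] [DecidableEq n]

/-- The matrix of power series attached to a power series of matrices. -/
noncomputable def psMat (f : MvPowerSeries σ (Matrix n n A)) :
    Matrix n n (MvPowerSeries σ A) :=
  Matrix.of fun i j =>
    (fun d => MvPowerSeries.coeff d f i j : MvPowerSeries σ A)

@[simp] lemma coeff_psMat (f : MvPowerSeries σ (Matrix n n A)) (i j : n) (d : σ →₀ ℕ) :
    MvPowerSeries.coeff d (psMat f i j) = MvPowerSeries.coeff d f i j :=
  rfl

/-- `psMat` as a ring homomorphism. -/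
noncomputable def psMatHom (A : Type*) [Ring A] (σ n : Type*) [Fintype n] [DecidableEq n] :
    MvPowerSeries σ (Matrix n n A) →+* Matrix n n (MvPowerSeries σ A) where
  toFun := psMat
  map_one' := by
    classical
    ext i j d
    rw [coeff_psMat]
    by_cases hij : i = j <;> by_cases hd : d = 0 <;>
      simp [hij, hd, Matrix.one_apply, MvPowerSeries.coeff_one]
  map_mul' f g := by
    classical
    ext i j d
    rw [coeff_psMat, MvPowerSeries.coeff_mul, Matrix.sum_apply, Matrix.mul_apply, map_sum]
    simp only [Matrix.mul_apply, MvPowerSeries.coeff_mul, coeff_psMat]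
    rw [Finset.sum_comm]
  map_zero' := by
    ext i j d
    rw [coeff_psMat]
    simp
  map_add' f g := by
    ext i j d
    rw [coeff_psMat]
    simp [Matrix.add_apply]

/-- A matrix of power series whose constant-coefficient matrix is a unit is a unit. -/
lemma isUnit_matrix_ps (M : Matrix n n (MvPowerSeries σ A))
    (h : IsUnit (Matrix.of fun i j => MvPowerSeries.constantCoeff (σ := σ) (R := A) (M i j))) :
    IsUnit M := by
  set f : MvPowerSeries σ (Matrix n n A) :=
    fun d => Matrix.of fun i j => MvPowerSeries.coeff d (M i j) with hf
  have h1 : psMatHom A σ n f = M := by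
    ext i j d
    rfl
  have h2 : IsUnit f := by
    rw [MvPowerSeries.isUnit_iff_constantCoeff]
    have : MvPowerSeries.constantCoeff (σ := σ) (R := Matrix n n A) f =
        Matrix.of fun i j => MvPowerSeries.constantCoeff (σ := σ) (R := A) (M i j) := rfl
    rw [this]
    exact h
  rw [← h1]
  exact h2.map (psMatHom A σ n)

end Hom


/-- Entrywise embedding of a constant matrix over `A` into matrices over the ring of
formal power series in `m` commuting variables over `A`. -/
noncomputable def matC {A : Type*} [Ring A] (m : ℕ) {κ ι : Type*} (M : Matrix κ ι A) :
    Matrix κ ι (MvPowerSeries (Fin m) A) :=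
  M.map (MvPowerSeries.C (σ := Fin m) (R := A))

/-- `X_k · M`, the constant matrix `M` multiplied by the `k`-th formal variable. -/
noncomputable def xMul {A : Type*} [Ring A] {m : ℕ} (k : Fin m) {κ ι : Type*}
    (M : Matrix κ ι A) : Matrix κ ι (MvPowerSeries (Fin m) A) :=
  (MvPowerSeries.X k : MvPowerSeries (Fin m) A) • matC m M

/-- The realization `D + C (1 − ∑_k X_k A_k)⁻¹ (∑_k X_k B_k)`, as a matrix of
formal power series in `m` commuting variables over `A`. -/
noncomputable def realization {A : Type*} [Ring A] (m : ℕ) {N p q : Type*}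
    [Fintype N] [DecidableEq N]
    (Ak : Fin m → Matrix N N A) (Bk : Fin m → Matrix N q A)
    (C : Matrix p N A) (D : Matrix p q A) : Matrix p q (MvPowerSeries (Fin m) A) :=
  matC m D + matC m C *
    Ring.inverse ((1 : Matrix N N (MvPowerSeries (Fin m) A)) - ∑ k, xMul k (Ak k)) *
    (∑ k, xMul k (Bk k))

section Lemmas

variable {A : Type*} [Ring A] {m : ℕ}

lemma matC_mul {κ ι τ : Type*} [Fintype ι] (M : Matrix κ ι A) (N : Matrix ι τ A) :
    matC m (M * N) = matC m M * matC m N :=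
  Matrix.map_mul

lemma xMul_mul {κ ι τ : Type*} [Fintype ι] (k : Fin m) (M : Matrix κ ι A) (N : Matrix ι τ A) :
    xMul k (M * N) = xMul k M * matC m N := by
  unfold xMul
  rw [matC_mul, Matrix.smul_mul]

lemma constantCoeff_xMul {κ ι : Type*} (k : Fin m) (M : Matrix κ ι A) (i : κ) (j : ι) :
    MvPowerSeries.constantCoeff (σ := Fin m) (R := A) (xMul k M i j) = 0 := by
  simp [xMul, matC, Matrix.smul_apply, smul_eq_mul, Matrix.map_apply]

lemma isUnit_one_sub_xMul {n : Type*} [Fintype n] [DecidableEq n]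
    (Ak : Fin m → Matrix n n A) :
    IsUnit ((1 : Matrix n n (MvPowerSeries (Fin m) A)) - ∑ k, xMul k (Ak k)) := by
  apply isUnit_matrix_ps
  have : (Matrix.of fun i j => MvPowerSeries.constantCoeff (σ := Fin m) (R := A)
      (((1 : Matrix n n (MvPowerSeries (Fin m) A)) - ∑ k, xMul k (Ak k)) i j)) =
      (1 : Matrix n n A) := by
    ext i j
    simp [Matrix.sub_apply, Matrix.sum_apply, constantCoeff_xMul, Matrix.one_apply, apply_ite]
    split_ifs <;> simp_all
  rw [this]
  exact isUnit_one

lemma xMul_fromBlocks {n₁ n₂ l₁ l₂ : Type*} (k : Fin m)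
    (P : Matrix n₁ l₁ A) (Q : Matrix n₁ l₂ A) (R : Matrix n₂ l₁ A) (S : Matrix n₂ l₂ A) :
    xMul k (Matrix.fromBlocks P Q R S) =
      Matrix.fromBlocks (xMul k P) (xMul k Q) (xMul k R) (xMul k S) := by
  unfold xMul matC
  rw [Matrix.fromBlocks_map, Matrix.fromBlocks_smul]

lemma xMul_zero {κ ι : Type*} (k : Fin m) :
    xMul k (0 : Matrix κ ι A) = 0 := by
  unfold xMul matC
  ext i j
  simp [Matrix.map_apply]

lemma xMul_fromRows {n₁ n₂ l : Type*} (k : Fin m)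
    (P : Matrix n₁ l A) (Q : Matrix n₂ l A) :
    xMul k (Matrix.fromRows P Q) = Matrix.fromRows (xMul k P) (xMul k Q) := by
  ext i j
  cases i <;>
    simp [xMul, matC, Matrix.smul_apply, Matrix.map_apply, Matrix.fromRows_apply_inl,
      Matrix.fromRows_apply_inr]

lemma matC_fromCols {n l₁ l₂ : Type*} (P : Matrix n l₁ A) (Q : Matrix n l₂ A) :
    matC m (Matrix.fromCols P Q) = Matrix.fromCols (matC m P) (matC m Q) := by
  ext i j
  cases j <;>
    simp [matC, Matrix.map_apply, Matrix.fromCols_apply_inl, Matrix.fromCols_apply_inr]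

lemma sum_fromBlocks {n₁ n₂ l₁ l₂ : Type*} {S : Type*} [AddCommMonoid S] {ι : Type*}
    (s : Finset ι) (f : ι → Matrix n₁ l₁ S) (g : ι → Matrix n₁ l₂ S)
    (h : ι → Matrix n₂ l₁ S) (l : ι → Matrix n₂ l₂ S) :
    ∑ i ∈ s, Matrix.fromBlocks (f i) (g i) (h i) (l i) =
      Matrix.fromBlocks (∑ i ∈ s, f i) (∑ i ∈ s, g i) (∑ i ∈ s, h i) (∑ i ∈ s, l i) := by
  ext (i | i) (j | j) <;> simp [Matrix.sum_apply]

lemma sum_fromRows {n₁ n₂ l : Type*} {S : Type*} [AddCommMonoid S] {ι : Type*}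
    (s : Finset ι) (f : ι → Matrix n₁ l S) (g : ι → Matrix n₂ l S) :
    ∑ i ∈ s, Matrix.fromRows (f i) (g i) =
      Matrix.fromRows (∑ i ∈ s, f i) (∑ i ∈ s, g i) := by
  ext (i | i) j <;> simp [Matrix.sum_apply]

lemma fromBlocks_sub {n₁ n₂ l₁ l₂ : Type*} {S : Type*} [SubtractionMonoid S]
    (a : Matrix n₁ l₁ S) (b : Matrix n₁ l₂ S) (c : Matrix n₂ l₁ S) (d : Matrix n₂ l₂ S)
    (a' : Matrix n₁ l₁ S) (b' : Matrix n₁ l₂ S) (c' : Matrix n₂ l₁ S) (d' : Matrix n₂ l₂ S) :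
    Matrix.fromBlocks a b c d - Matrix.fromBlocks a' b' c' d' =
      Matrix.fromBlocks (a - a') (b - b') (c - c') (d - d') := by
  ext (i | i) (j | j) <;> simp

end Lemmas

/-- A realization of the product `R₁ R₂` of two realizations, via block matrices:
`A_k = [[A₁ₖ, B₁ₖ C₂], [0, A₂ₖ]]`, `B_k = [B₁ₖ D₂; B₂ₖ]`, `C = [C₁, D₁ C₂]`,
`D = D₁ D₂`. -/
theorem stmt11 {A : Type*} [Ring A] {m N₁ N₂ p q r : ℕ}
    (A1 : Fin m → Matrix (Fin N₁) (Fin N₁) A) (B1 : Fin m → Matrix (Fin N₁) (Fin q) A)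
    (C1 : Matrix (Fin p) (Fin N₁) A) (D1 : Matrix (Fin p) (Fin q) A)
    (A2 : Fin m → Matrix (Fin N₂) (Fin N₂) A) (B2 : Fin m → Matrix (Fin N₂) (Fin r) A)
    (C2 : Matrix (Fin q) (Fin N₂) A) (D2 : Matrix (Fin q) (Fin r) A) :
    realization m A1 B1 C1 D1 * realization m A2 B2 C2 D2 =
      realization m
        (fun k => Matrix.fromBlocks (A1 k) (B1 k * C2) 0 (A2 k))
        (fun k => Matrix.fromRows (B1 k * D2) (B2 k))
        (Matrix.fromCols C1 (D1 * C2))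
        (D1 * D2) := by
  classical
  simp only [realization]
  set F₁ : Matrix (Fin N₁) (Fin N₁) (MvPowerSeries (Fin m) A) :=
    1 - ∑ k, xMul k (A1 k) with hF₁def
  set F₂ : Matrix (Fin N₂) (Fin N₂) (MvPowerSeries (Fin m) A) :=
    1 - ∑ k, xMul k (A2 k) with hF₂def
  set G₁ : Matrix (Fin N₁) (Fin q) (MvPowerSeries (Fin m) A) :=
    ∑ k, xMul k (B1 k) with hG₁def
  set G₂ : Matrix (Fin N₂) (Fin r) (MvPowerSeries (Fin m) A) :=
    ∑ k, xMul k (B2 k) with hG₂def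
  have hu₁ : IsUnit F₁ := isUnit_one_sub_xMul A1
  have hu₂ : IsUnit F₂ := isUnit_one_sub_xMul A2
  set iF₁ := Ring.inverse F₁ with hiF₁def
  set iF₂ := Ring.inverse F₂ with hiF₂def
  set H : Matrix (Fin N₁) (Fin N₂) (MvPowerSeries (Fin m) A) := G₁ * matC m C2 with hHdef
  have hHsum : ∑ k, xMul k (B1 k * C2) = H := by
    rw [hHdef, hG₁def, Matrix.sum_mul]
    exact Finset.sum_congr rfl fun k _ => xMul_mul k (B1 k) C2
  have hBsum : ∑ k, xMul k (Matrix.fromRows (B1 k * D2) (B2 k)) =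
      Matrix.fromRows (G₁ * matC m D2) G₂ := by
    have hfirst : ∑ k, xMul k (B1 k * D2) = G₁ * matC m D2 := by
      rw [hG₁def, Matrix.sum_mul]
      exact Finset.sum_congr rfl fun k _ => xMul_mul k (B1 k) D2
    simp_rw [xMul_fromRows]
    rw [sum_fromRows, hfirst, hG₂def]
  have hFblk : (1 : Matrix (Fin N₁ ⊕ Fin N₂) (Fin N₁ ⊕ Fin N₂) (MvPowerSeries (Fin m) A)) -
      ∑ k, xMul k (Matrix.fromBlocks (A1 k) (B1 k * C2) 0 (A2 k)) =
      Matrix.fromBlocks F₁ (-H) 0 F₂ := by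
    simp_rw [xMul_fromBlocks, xMul_zero]
    rw [sum_fromBlocks, ← Matrix.fromBlocks_one, fromBlocks_sub, Finset.sum_const_zero,
      sub_zero, zero_sub, hHsum, hF₁def, hF₂def]
  set Fb := Matrix.fromBlocks F₁ (-H) 0 F₂ with hFbdef
  set J := Matrix.fromBlocks iF₁ (iF₁ * H * iF₂) 0 iF₂ with hJdef
  have e₁ : F₁ * iF₁ = 1 := Ring.mul_inverse_cancel _ hu₁
  have e₁' : iF₁ * F₁ = 1 := Ring.inverse_mul_cancel _ hu₁
  have e₂ : F₂ * iF₂ = 1 := Ring.mul_inverse_cancel _ hu₂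
  have e₂' : iF₂ * F₂ = 1 := Ring.inverse_mul_cancel _ hu₂
  have hFJ : Fb * J = 1 := by
    rw [hFbdef, hJdef, Matrix.fromBlocks_multiply]
    have t2 : F₁ * (iF₁ * H * iF₂) + (-H) * iF₂ = 0 := by
      rw [← Matrix.mul_assoc, ← Matrix.mul_assoc, e₁, Matrix.one_mul, Matrix.neg_mul]
      exact add_neg_cancel _
    rw [t2, e₁, e₂]
    simp [Matrix.fromBlocks_one]
  have hJF : J * Fb = 1 := by
    rw [hFbdef, hJdef, Matrix.fromBlocks_multiply]
    have t2 : iF₁ * (-H) + (iF₁ * H * iF₂) * F₂ = 0 := by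
      rw [Matrix.mul_assoc (iF₁ * H) iF₂ F₂, e₂', Matrix.mul_one, Matrix.mul_neg]
      exact neg_add_cancel _
    rw [t2, e₁', e₂']
    simp [Matrix.fromBlocks_one]
  have huF : IsUnit Fb := ⟨⟨Fb, J, hFJ, hJF⟩, rfl⟩
  have hinv : Ring.inverse Fb = J := by
    calc Ring.inverse Fb = Ring.inverse Fb * (Fb * J) := by rw [hFJ, Matrix.mul_one]
      _ = (Ring.inverse Fb * Fb) * J := by rw [Matrix.mul_assoc]
      _ = J := by rw [Ring.inverse_mul_cancel _ huF, Matrix.one_mul]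
  rw [hFblk, hinv, hBsum, matC_mul D1 D2, matC_fromCols, matC_mul D1 C2, hJdef,
    Matrix.fromCols_mul_fromBlocks, Matrix.fromCols_mul_fromRows]
  simp only [Matrix.mul_zero, add_zero, hHdef]
  simp only [Matrix.mul_add, Matrix.add_mul, Matrix.mul_assoc]
  abel
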